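/- Let h be holomorphic on {Re z ≥ 0}, of exponential type (|h(z)| ≤ C e^{A|z|} for some A, C), bounded by c₁ on the imaginary axis, and suppose h vanishes on a strictly increasing sequence (b_k) of positive reals with b_{k+1} − b_k ≥ γ > 0 and b_k/k → 1/2 as k → ∞ (so the sequence has density 2). If additionally limsup_{|y|→∞} log|h(iy)|/|y| < 2π, then h vanishes identically on {Re z ≥ 0}. -/

import Mathlib

open Complex Filter Topology Set

lemma rhp_mem_nhds {b : ℝ} (hb : 0 < b) : {z : ℂ | 0 ≤ z.re} ∈ 𝓝 ((b : ℝ) : ℂ) := by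
  have : {z : ℂ | 0 < z.re} ∈ 𝓝 ((b : ℝ) : ℂ) :=
    (isOpen_lt continuous_const continuous_re).mem_nhds (by simpa using hb)
  exact Filter.mem_of_superset this (fun z hz => le_of_lt (α := ℝ) hz)

lemma step_diff (g : ℂ → ℂ) (b : ℝ) (hb : 0 < b)
    (hd : DifferentiableOn ℂ g {z : ℂ | 0 ≤ z.re}) :
    DifferentiableOn ℂ (fun z => (z + (b : ℂ)) * dslope g (b : ℂ) z) {z : ℂ | 0 ≤ z.re} := by
  have hds : DifferentiableOn ℂ (dslope g (b : ℂ)) {z : ℂ | 0 ≤ z.re} :=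
    (Complex.differentiableOn_dslope (rhp_mem_nhds hb)).2 hd
  exact (differentiableOn_id.add (differentiableOn_const _)).mul hds

lemma key_identity (g : ℂ → ℂ) (b : ℝ) (hgb : g ((b:ℝ) : ℂ) = 0) (w : ℂ) :
    (w - (b:ℂ)) * ((w + (b:ℂ)) * dslope g (b:ℂ) w) = (w + (b:ℂ)) * g w := by
  have := sub_smul_dslope g ((b:ℝ):ℂ) w
  rw [smul_eq_mul, hgb, sub_zero] at this
  calc (w - (b:ℂ)) * ((w + (b:ℂ)) * dslope g (b:ℂ) w)
      = (w + (b:ℂ)) * ((w - (b:ℂ)) * dslope g (b:ℂ) w) := by ring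
    _ = (w + (b:ℂ)) * g w := by rw [this]

lemma abs_eq_on_axis (b : ℝ) (w : ℂ) (hw : w.re = 0) :
    ‖w - (b:ℂ)‖ = ‖w + (b:ℂ)‖ := by
  have h1 : ‖w - (b:ℂ)‖ ^ 2 = ‖w + (b:ℂ)‖ ^ 2 := by
    rw [Complex.sq_norm, Complex.sq_norm, Complex.normSq_apply, Complex.normSq_apply]
    simp [hw]
  nlinarith [norm_nonneg (w + (b:ℂ)),
    norm_nonneg (w - (b:ℂ))]

lemma step_bound (g : ℂ → ℂ) (M : ℝ) (hM0 : 0 ≤ M) (b : ℝ) (hb : 0 < b)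
    (hd : DifferentiableOn ℂ g {z : ℂ | 0 ≤ z.re})
    (hgb : g ((b:ℝ):ℂ) = 0)
    (hM : ∀ z : ℂ, 0 ≤ z.re → ‖g z‖ ≤ M) :
    ∀ z : ℂ, 0 ≤ z.re → ‖(z + (b:ℂ)) * dslope g (b:ℂ) z‖ ≤ M := by
  intro z hz
  set T : ℂ → ℂ := fun w => (w + (b:ℂ)) * dslope g (b:ℂ) w with hT
  have hTd : DifferentiableOn ℂ T {w : ℂ | 0 ≤ w.re} := step_diff g b hb hd
  have hnorm : ∀ w : ℂ, ‖w - (b:ℂ)‖ * ‖T w‖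
      = ‖w + (b:ℂ)‖ * ‖g w‖ := by
    intro w
    have h := congrArg norm (key_identity g b hgb w)
    rw [norm_mul, norm_mul] at h
    simpa [hT] using h
  have hest : ∀ R : ℝ, ‖z‖ + 1 ≤ R → b + 1 ≤ R →
      ‖T z‖ ≤ M * ((R + b)/(R - b)) := by
    intro R hR1 hR2
    have hzabs : (0:ℝ) ≤ ‖z‖ := norm_nonneg _
    have hRb0 : 0 < R - b := by linarith
    have hratio1 : 1 ≤ (R + b)/(R - b) := by
      rw [le_div_iff₀ hRb0]; linarith
    set U : Set ℂ := Metric.ball (0:ℂ) R ∩ {w : ℂ | 0 < w.re} with hU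
    have hUopen : IsOpen U :=
      Metric.isOpen_ball.inter (isOpen_lt continuous_const continuous_re)
    have hUsub : closure U ⊆ Metric.closedBall (0:ℂ) R ∩ {w : ℂ | 0 ≤ w.re} := by
      refine closure_minimal ?_
        (Metric.isClosed_closedBall.inter (isClosed_le continuous_const continuous_re))
      exact Set.inter_subset_inter Metric.ball_subset_closedBall
        (fun w hw => le_of_lt (α := ℝ) hw)
    have habs_mem : ∀ w ∈ closure U, ‖w‖ ≤ R ∧ 0 ≤ w.re := by
      intro w hw
      have h2 := hUsub hw
      constructor
      · simpa [Complex.dist_eq] using Metric.mem_closedBall.1 h2.1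
      · exact h2.2
    refine Complex.norm_le_of_forall_mem_frontier_norm_le (U := U)
      (Metric.isBounded_ball.subset (hU ▸ Set.inter_subset_left)) ?_ ?_ ?_
    · exact ⟨hTd.mono (fun w hw => le_of_lt (α := ℝ) hw.2),
        hTd.continuousOn.mono (fun w hw => (habs_mem w hw).2)⟩
    · intro w hw
      rw [hUopen.frontier_eq] at hw
      obtain ⟨hwc, hwn⟩ := hw
      obtain ⟨hwball, hwre⟩ := habs_mem w hwc
      have hTn : (0:ℝ) ≤ ‖T w‖ := norm_nonneg _
      have hgw : ‖g w‖ ≤ M := hM w hwre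
      have hgn : (0:ℝ) ≤ ‖g w‖ := norm_nonneg _
      by_cases hre0 : w.re = 0
      · have heq := hnorm w
        rw [abs_eq_on_axis b w hre0] at heq
        have hne : (0:ℝ) < ‖w + (b:ℂ)‖ := by
          have : (w + (b:ℂ)).re = b := by simp [hre0]
          have hne' : w + (b:ℂ) ≠ 0 := by
            intro h0; rw [h0] at this; simp at this; linarith
          exact norm_pos_iff.2 hne'
        have hTw : ‖T w‖ = ‖g w‖ := by
          have := mul_left_cancel₀ (ne_of_gt hne) heq
          exact this
        rw [hTw]
        calc ‖g w‖ ≤ M := hgw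
          _ = M * 1 := (mul_one M).symm
          _ ≤ M * ((R + b)/(R - b)) := by
              exact mul_le_mul_of_nonneg_left hratio1 hM0
      · -- |w| = R case
        have hwreR : 0 < w.re := lt_of_le_of_ne hwre (Ne.symm hre0)
        have hwR : R ≤ ‖w‖ := by
          by_contra hcon
          push_neg at hcon
          exact hwn ⟨by simpa [Complex.dist_eq] using hcon, hwreR⟩
        have hlow : R - b ≤ ‖w - (b:ℂ)‖ := by
          have h1 : ‖w‖ - ‖((b:ℝ):ℂ)‖ ≤ ‖w - (b:ℂ)‖ := by
            simpa using
              norm_sub_norm_le w ((b:ℝ):ℂ)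
          have h2 : ‖((b:ℝ):ℂ)‖ = b := by
            simp [abs_of_pos hb]
          rw [h2] at h1; linarith
        have hup : ‖w + (b:ℂ)‖ ≤ R + b := by
          have h1 : ‖w + (b:ℂ)‖ ≤ ‖w‖ + ‖((b:ℝ):ℂ)‖ := by
            simpa using norm_add_le w ((b:ℝ):ℂ)
          have h2 : ‖((b:ℝ):ℂ)‖ = b := by
            simp [abs_of_pos hb]
          rw [h2] at h1; linarith
        have heq := hnorm w
        rw [show M * ((R + b)/(R - b)) = (M * (R + b))/(R - b) by ring,
          le_div_iff₀ hRb0]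
        have h3 : (R - b) * ‖T w‖ ≤ ‖w - (b:ℂ)‖ * ‖T w‖ :=
          mul_le_mul_of_nonneg_right hlow hTn
        have h4 : ‖w + (b:ℂ)‖ * ‖g w‖ ≤ (R + b) * M := by
          apply mul_le_mul hup hgw hgn
          linarith
        nlinarith
    · -- z ∈ closure U
      have hseq : Tendsto (fun n : ℕ => z + (((1:ℝ)/((n:ℝ)+1) : ℝ) : ℂ)) atTop (𝓝 z) := by
        have : Tendsto (fun n : ℕ => z + (((1:ℝ)/((n:ℝ)+1) : ℝ) : ℂ)) atTop (𝓝 (z + ((0:ℝ):ℂ))) := by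
          apply tendsto_const_nhds.add
          exact (Complex.continuous_ofReal.tendsto 0).comp tendsto_one_div_add_atTop_nhds_zero_nat
        simpa using this
      refine mem_closure_of_tendsto hseq ?_
      filter_upwards [eventually_ge_atTop 1] with n hn
      have hpos : (0:ℝ) < 1/((n:ℝ)+1) := by positivity
      have hle : 1/((n:ℝ)+1) ≤ 1/2 := by
        rw [div_le_div_iff₀ (by positivity) (by norm_num)]
        have : (1:ℝ) ≤ (n:ℝ) := by exact_mod_cast hn
        linarith
      constructor
      · rw [Metric.mem_ball, Complex.dist_eq]
        calc ‖z + (((1:ℝ)/((n:ℝ)+1) : ℝ) : ℂ) - 0‖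
            ≤ ‖z‖ + ‖(((1:ℝ)/((n:ℝ)+1) : ℝ) : ℂ)‖ := by
              simpa using norm_add_le z (((1:ℝ)/((n:ℝ)+1) : ℝ) : ℂ)
          _ = ‖z‖ + 1/((n:ℝ)+1) := by
              rw [Complex.norm_real, Real.norm_eq_abs, abs_of_pos hpos]
          _ < R := by linarith
      · show 0 < (z + (((1:ℝ)/((n:ℝ)+1) : ℝ) : ℂ)).re
        simp only [Complex.add_re, Complex.ofReal_re]
        linarith [hz]
  have hlim : Tendsto (fun R : ℝ => M * ((R + b)/(R - b))) atTop (𝓝 (M * 1)) := by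
    apply Tendsto.const_mul
    have h0 : Tendsto (fun R : ℝ => 1 + 2*b/(R - b)) atTop (𝓝 (1 + 0)) := by
      apply tendsto_const_nhds.add
      exact Tendsto.div_atTop tendsto_const_nhds
        (tendsto_atTop_add_const_right _ (-b) tendsto_id)
    have heq : ∀ᶠ R : ℝ in atTop, 1 + 2*b/(R - b) = (R + b)/(R - b) := by
      filter_upwards [eventually_gt_atTop b] with R hR
      have : R - b ≠ 0 := sub_ne_zero.2 (ne_of_gt hR)
      field_simp
      ring
    rw [show (1:ℝ) + 0 = 1 by norm_num] at h0
    exact Tendsto.congr' heq h0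
  rw [show M = M * 1 by ring]
  apply ge_of_tendsto hlim
  filter_upwards [eventually_ge_atTop (max (‖z‖ + 1) (b+1))] with R hR
  exact hest R (le_trans (le_max_left _ _) hR) (le_trans (le_max_right _ _) hR)

noncomputable def blaschkeIter (g : ℂ → ℂ) (b : ℕ → ℝ) : ℕ → ℂ → ℂ
  | 0 => g
  | (n+1) => fun z => (z + ((b n : ℝ) : ℂ)) * dslope (blaschkeIter g b n) ((b n : ℝ) : ℂ) z

lemma blaschkeIter_props (g : ℂ → ℂ) (M : ℝ) (hM0 : 0 ≤ M) (b : ℕ → ℝ)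
    (hb_mono : StrictMono b) (hb_pos : ∀ k, 0 < b k)
    (hd : DifferentiableOn ℂ g {z : ℂ | 0 ≤ z.re})
    (hbd : ∀ z : ℂ, 0 ≤ z.re → ‖g z‖ ≤ M)
    (hz : ∀ k, g ((b k : ℝ) : ℂ) = 0) :
    ∀ n, DifferentiableOn ℂ (blaschkeIter g b n) {z : ℂ | 0 ≤ z.re}
      ∧ (∀ z : ℂ, 0 ≤ z.re → ‖blaschkeIter g b n z‖ ≤ M)
      ∧ (∀ k, n ≤ k → blaschkeIter g b n ((b k : ℝ) : ℂ) = 0) := by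
  intro n
  induction n with
  | zero => exact ⟨hd, hbd, fun k _ => hz k⟩
  | succ n ih =>
    obtain ⟨ihd, ihb, ihz⟩ := ih
    have hzn : blaschkeIter g b n ((b n : ℝ) : ℂ) = 0 := ihz n le_rfl
    refine ⟨step_diff _ (b n) (hb_pos n) ihd,
      step_bound _ M hM0 (b n) (hb_pos n) ihd hzn ihb, ?_⟩
    intro k hk
    have hne : ((b k : ℝ) : ℂ) ≠ ((b n : ℝ) : ℂ) := by
      simp only [ne_eq, Complex.ofReal_inj]
      exact ne_of_gt (hb_mono (Nat.lt_of_succ_le hk))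
    show ((((b k : ℝ) : ℂ)) + ((b n : ℝ) : ℂ)) *
      dslope (blaschkeIter g b n) ((b n : ℝ) : ℂ) ((b k : ℝ) : ℂ) = 0
    rw [dslope_of_ne _ hne, slope_def_field, ihz k (Nat.le_of_succ_le hk), hzn]
    simp

lemma blaschkeIter_eq (g : ℂ → ℂ) (M : ℝ) (hM0 : 0 ≤ M) (b : ℕ → ℝ)
    (hb_mono : StrictMono b) (hb_pos : ∀ k, 0 < b k)
    (hd : DifferentiableOn ℂ g {z : ℂ | 0 ≤ z.re})
    (hbd : ∀ z : ℂ, 0 ≤ z.re → ‖g z‖ ≤ M)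
    (hz : ∀ k, g ((b k : ℝ) : ℂ) = 0)
    (z : ℂ) (hzne : ∀ k, z ≠ ((b k : ℝ) : ℂ)) :
    ∀ n, blaschkeIter g b n z
      = g z * ∏ k ∈ Finset.range n, (z + ((b k:ℝ):ℂ))/(z - ((b k:ℝ):ℂ)) := by
  intro n
  induction n with
  | zero => simp [blaschkeIter]
  | succ n ih =>
    have hzn : blaschkeIter g b n ((b n : ℝ) : ℂ) = 0 :=
      (blaschkeIter_props g M hM0 b hb_mono hb_pos hd hbd hz n).2.2 n le_rfl
    show (z + ((b n : ℝ) : ℂ)) * dslope (blaschkeIter g b n) ((b n : ℝ) : ℂ) z = _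
    rw [dslope_of_ne _ (hzne n), slope_def_field, hzn, sub_zero, ih,
      Finset.prod_range_succ]
    ring

lemma prod_tendsto_zero (b : ℕ → ℝ) (hb_pos : ∀ k, 0 < b k) (γ : ℝ) (hγ : 0 < γ)
    (hb_gap : ∀ k, γ ≤ b (k + 1) - b k)
    (hb_up : ∀ᶠ k : ℕ in atTop, b k ≤ (k : ℝ))
    (z : ℂ) (hx : 0 < z.re) (hy : z.im ≠ 0) :
    Tendsto (fun n => ∏ k ∈ Finset.range n,
      ‖z - ((b k:ℝ):ℂ)‖ / ‖z + ((b k:ℝ):ℂ)‖) atTop (𝓝 0) := by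
  set ρ : ℕ → ℝ := fun k => ‖z - ((b k:ℝ):ℂ)‖ / ‖z + ((b k:ℝ):ℂ)‖
    with hρ
  have hu_pos : ∀ k, 0 < ‖z - ((b k:ℝ):ℂ)‖ := by
    intro k
    apply norm_pos_iff.2
    intro h0
    have : (z - ((b k:ℝ):ℂ)).im = 0 := by rw [h0]; simp
    simp only [Complex.sub_im, Complex.ofReal_im, sub_zero] at this
    exact hy this
  have hv_pos : ∀ k, 0 < ‖z + ((b k:ℝ):ℂ)‖ := by
    intro k
    apply norm_pos_iff.2
    intro h0
    have : (z + ((b k:ℝ):ℂ)).re = 0 := by rw [h0]; simp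
    simp only [Complex.add_re, Complex.ofReal_re] at this
    linarith [hb_pos k]
  have hρ_pos : ∀ k, 0 < ρ k := fun k => div_pos (hu_pos k) (hv_pos k)
  -- logarithmic estimate
  have hlog : ∀ k, Real.log (ρ k)
      ≤ -(2 * b k * z.re) / (‖z + ((b k:ℝ):ℂ)‖)^2 := by
    intro k
    set u := ‖z - ((b k:ℝ):ℂ)‖ with hu
    set v := ‖z + ((b k:ℝ):ℂ)‖ with hv
    have hu0 := hu_pos k
    have hv0 := hv_pos k
    have h2 : Real.log (ρ k) = Real.log u - Real.log v :=
      Real.log_div (ne_of_gt hu0) (ne_of_gt hv0)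
    have h3 : (2:ℝ) * (Real.log u - Real.log v) = Real.log (u^2) - Real.log (v^2) := by
      rw [Real.log_pow, Real.log_pow]; push_cast; ring
    have h4 : Real.log (u^2) - Real.log (v^2) = Real.log (u^2/v^2) :=
      (Real.log_div (by positivity) (by positivity)).symm
    have h5 : Real.log (u^2/v^2) ≤ u^2/v^2 - 1 :=
      Real.log_le_sub_one_of_pos (by positivity)
    have h6 : u^2 - v^2 = -(4 * b k * z.re) := by
      rw [hu, hv, Complex.sq_norm, Complex.sq_norm, Complex.normSq_apply, Complex.normSq_apply]
      simp only [Complex.sub_re, Complex.sub_im, Complex.add_re, Complex.add_im,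
        Complex.ofReal_re, Complex.ofReal_im, sub_zero, add_zero]
      ring
    have h7 : u^2/v^2 - 1 = (u^2 - v^2)/v^2 := by rw [div_sub_one (pow_ne_zero 2 (ne_of_gt hv0))]
    have h8 : (2:ℝ) * Real.log (ρ k) ≤ -(4 * b k * z.re) / v^2 := by
      rw [h2, h3, h4]
      calc Real.log (u^2/v^2) ≤ u^2/v^2 - 1 := h5
        _ = (u^2 - v^2)/v^2 := h7
        _ = -(4 * b k * z.re) / v^2 := by rw [h6]
    have h9 : -(4 * b k * z.re) / v^2 = 2 * (-(2 * b k * z.re) / v^2) := by ring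
    linarith [h8, h9 ▸ h8]
  -- lower linear bound for b
  have hlow : ∀ k : ℕ, γ * k ≤ b k := by
    intro k
    induction k with
    | zero => simpa using le_of_lt (hb_pos 0)
    | succ k ih =>
      have := hb_gap k
      push_cast
      have : γ * ((k:ℝ) + 1) = γ * k + γ := by ring
      rw [this]
      linarith [hb_gap k, ih]
  -- choose N
  obtain ⟨N₀, hN₀⟩ := eventually_atTop.1 hb_up
  set N := max N₀ 1 with hN
  set c := γ * z.re / (‖z‖ + 1)^2 with hc
  have habsz : (0:ℝ) ≤ ‖z‖ := norm_nonneg _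
  have hc_pos : 0 < c := by
    apply div_pos (mul_pos hγ hx)
    positivity
  have hkey : ∀ k, N ≤ k → Real.log (ρ k) ≤ -c/((k:ℝ)+1) := by
    intro k hk
    have hk1 : 1 ≤ k := le_trans (le_max_right _ _) hk
    have hk1' : (1:ℝ) ≤ (k:ℝ) := by exact_mod_cast hk1
    have hbk_up : b k ≤ (k:ℝ) := hN₀ k (le_trans (le_max_left _ _) hk)
    have hbk_low : γ * k ≤ b k := hlow k
    set v := ‖z + ((b k:ℝ):ℂ)‖ with hv
    have hv0 := hv_pos k
    have hv_up : v ≤ (‖z‖ + 1) * ((k:ℝ)+1) := by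
      have h1 : v ≤ ‖z‖ + ‖(((b k:ℝ)):ℂ)‖ := by
        simpa using norm_add_le z (((b k:ℝ)):ℂ)
      have h2 : ‖(((b k:ℝ)):ℂ)‖ = b k := by
        rw [Complex.norm_real, Real.norm_eq_abs, abs_of_pos (hb_pos k)]
      rw [h2] at h1
      nlinarith
    have hv2 : v^2 ≤ ((‖z‖ + 1) * ((k:ℝ)+1))^2 := by
      apply pow_le_pow_left₀ (le_of_lt hv0) hv_up
    have hbk2 : γ * ((k:ℝ)+1) ≤ 2 * b k := by nlinarith
    have hgoal : c/((k:ℝ)+1) ≤ (2 * b k * z.re) / v^2 := by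
      rw [div_le_div_iff₀ (by positivity) (by positivity)]
      have hcD : c * (‖z‖ + 1)^2 = γ * z.re := by
        rw [hc]; field_simp
      have h1 : c * v^2 ≤ c * ((‖z‖ + 1) * ((k:ℝ)+1))^2 :=
        mul_le_mul_of_nonneg_left hv2 hc_pos.le
      have h2 : c * ((‖z‖ + 1) * ((k:ℝ)+1))^2 = (γ * z.re) * ((k:ℝ)+1)^2 := by
        rw [mul_pow, ← mul_assoc, hcD]
      have h3 : (γ * ((k:ℝ)+1)) * (z.re * ((k:ℝ)+1)) ≤ (2 * b k) * (z.re * ((k:ℝ)+1)) :=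
        mul_le_mul_of_nonneg_right hbk2 (by positivity)
      nlinarith [h1, h2, h3]
    calc Real.log (ρ k) ≤ -(2 * b k * z.re) / v^2 := hlog k
      _ = -((2 * b k * z.re) / v^2) := by ring
      _ ≤ -(c/((k:ℝ)+1)) := neg_le_neg hgoal
      _ = -c/((k:ℝ)+1) := by ring
  -- sums
  set S : ℕ → ℝ := fun n => ∑ k ∈ Finset.range n, Real.log (ρ k) with hS
  set H : ℕ → ℝ := fun n => ∑ k ∈ Finset.range n, (1/((k:ℝ)+1)) with hH
  have hHtop : Tendsto H atTop atTop := Real.tendsto_sum_range_one_div_nat_succ_atTop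
  have hSbound : ∀ n, N ≤ n → S n ≤ (S N + c * H N) - c * H n := by
    intro n hn
    have hsplit : S n = S N + ∑ k ∈ Finset.Ico N n, Real.log (ρ k) := by
      rw [hS]
      simp only
      rw [Finset.range_eq_Ico, ← Finset.sum_Ico_consecutive _ (Nat.zero_le N) hn,
        ← Finset.range_eq_Ico]
    have hsum_le : ∑ k ∈ Finset.Ico N n, Real.log (ρ k)
        ≤ ∑ k ∈ Finset.Ico N n, (-c/((k:ℝ)+1)) := by
      apply Finset.sum_le_sum
      intro k hk
      exact hkey k (Finset.mem_Ico.1 hk).1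
    have hsum_eq : ∑ k ∈ Finset.Ico N n, (-c/((k:ℝ)+1)) = -c * (H n - H N) := by
      have hmul : ∀ m : ℕ, ∑ k ∈ Finset.range m, (-c/((k:ℝ)+1))
          = -c * ∑ k ∈ Finset.range m, (1/((k:ℝ)+1)) := by
        intro m
        rw [Finset.mul_sum]
        apply Finset.sum_congr rfl
        intros; ring
      rw [Finset.sum_Ico_eq_sub _ hn, hmul, hmul, hH]
      ring
    rw [hsum_eq] at hsum_le
    rw [hsplit]
    linarith
  have hfin : Tendsto (fun n => (S N + c * H N) - c * H n) atTop atBot := by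
    have h1 : Tendsto (fun n => c * H n) atTop atTop := hHtop.const_mul_atTop hc_pos
    have h2 : Tendsto (fun n => -(c * H n)) atTop atBot := tendsto_neg_atTop_atBot.comp h1
    have h3 := tendsto_atBot_add_const_left atTop (S N + c * H N) h2
    exact h3.congr (fun n => by ring)
  have hStend : Tendsto S atTop atBot := by
    apply tendsto_atBot_mono' atTop ?_ hfin
    filter_upwards [eventually_ge_atTop N] with n hn
    exact hSbound n hn
  have hPeq : ∀ n, ∏ k ∈ Finset.range n, ρ k = Real.exp (S n) := by
    intro n
    rw [hS]
    simp only
    rw [Real.exp_sum]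
    exact Finset.prod_congr rfl (fun k _ => (Real.exp_log (hρ_pos k)).symm)
  have := Real.tendsto_exp_atBot.comp hStend
  exact this.congr (fun n => (hPeq n).symm)

/-- classical Carlson-type theorem for zero sets of density 2:
a function holomorphic on {Re z ≥ 0}, of exponential type, bounded on the
imaginary axis, vanishing on a separated strictly increasing sequence
(b_k) of positive reals with b_k/k → 1/2, whose growth indicator on the
imaginary axis satisfies limsup_{|y|→∞} log|h(iy)|/|y| < 2π, vanishes
identically on {Re z ≥ 0}. -/
theorem stmt14 (h : ℂ → ℂ)
    (hdiff : DifferentiableOn ℂ h {z : ℂ | 0 ≤ z.re})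
    (A C c₁ : ℝ)
    (htype : ∀ z : ℂ, 0 ≤ z.re →
      ‖h z‖ ≤ C * Real.exp (A * ‖z‖))
    (him : ∀ y : ℝ, ‖h (Complex.I * (y : ℂ))‖ ≤ c₁)
    (b : ℕ → ℝ) (hb_mono : StrictMono b) (hb_pos : ∀ k, 0 < b k)
    (γ : ℝ) (hγ : 0 < γ) (hb_gap : ∀ k, γ ≤ b (k + 1) - b k)
    (hb_density : Tendsto (fun k : ℕ => b k / k) atTop (𝓝 (1 / 2)))
    (hindicator :
      Filter.limsup
        (fun y : ℝ => Real.log ‖h (Complex.I * (y : ℂ))‖ / |y|)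
        (Filter.atTop ⊔ Filter.atBot) < 2 * Real.pi)
    (hzero : ∀ k, h ((b k : ℝ) : ℂ) = 0) :
    ∀ z : ℂ, 0 ≤ z.re → h z = 0 := by
  have hc₁ : 0 ≤ c₁ := le_trans (norm_nonneg _) (him 0)
  set A' : ℝ := max A 0 with hA'
  have hA'0 : 0 ≤ A' := le_max_right _ _
  have hAA' : A ≤ A' := le_max_left _ _
  have hC0 : 0 ≤ C := by
    have h1 := htype 0 (by simp)
    nlinarith [Real.exp_pos (A * ‖(0:ℂ)‖), norm_nonneg (h 0)]
  set g : ℂ → ℂ := fun z => Complex.exp (-(A':ℂ) * z) * h z with hg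
  have hgnorm : ∀ z : ℂ, ‖g z‖ = Real.exp (-(A' * z.re)) * ‖h z‖ := by
    intro z
    rw [hg]
    simp only
    rw [norm_mul, Complex.norm_exp]
    congr 2
    simp [Complex.neg_re, Complex.re_ofReal_mul]
  have hgd_closed : DifferentiableOn ℂ g {z : ℂ | 0 ≤ z.re} :=
    (((differentiable_const _).mul differentiable_id).cexp.differentiableOn).mul hdiff
  have habs_ofReal_nonneg : ∀ x : ℝ, 0 ≤ x → ‖((x:ℝ):ℂ)‖ = x := by
    intro x hx; rw [Complex.norm_real, Real.norm_eq_abs, _root_.abs_of_nonneg hx]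
  -- Phragmen-Lindelof: g is bounded by c₁ on the closed right half-plane
  have hbound : ∀ z : ℂ, 0 ≤ z.re → ‖g z‖ ≤ c₁ := by
    intro z hz
    apply PhragmenLindelof.right_half_plane_of_bounded_on_real (f := g)
    · refine ⟨hgd_closed.mono (fun w hw => le_of_lt (α := ℝ) hw), hgd_closed.continuousOn.mono ?_⟩
      exact closure_minimal (fun w hw => le_of_lt (α := ℝ) hw)
        (isClosed_le continuous_const continuous_re)
    · refine ⟨1, by norm_num, A', ?_⟩
      apply Asymptotics.IsBigO.of_bound C
      rw [Filter.eventually_inf_principal]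
      apply Filter.Eventually.of_forall
      intro w hw
      have hw' : (0:ℝ) ≤ w.re := le_of_lt hw
      have h1 : ‖g w‖ ≤ ‖h w‖ := by
        rw [hgnorm w]
        calc Real.exp (-(A' * w.re)) * ‖h w‖
            ≤ 1 * ‖h w‖ := by
              apply mul_le_mul_of_nonneg_right _ (norm_nonneg _)
              rw [Real.exp_le_one_iff]
              nlinarith
          _ = ‖h w‖ := one_mul _
      have h2 : ‖h w‖ ≤ C * Real.exp (A' * ‖w‖) := by
        calc ‖h w‖ ≤ C * Real.exp (A * ‖w‖) := htype w hw'
          _ ≤ C * Real.exp (A' * ‖w‖) := by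
              apply mul_le_mul_of_nonneg_left _ hC0
              apply Real.exp_le_exp.2
              nlinarith [norm_nonneg w]
      rw [Real.norm_eq_abs, Real.rpow_one,
        abs_of_pos (Real.exp_pos _)]
      exact le_trans h1 h2
    · refine ⟨C, ?_⟩
      rw [Filter.eventually_map]
      filter_upwards [eventually_ge_atTop (0:ℝ)] with x hx
      have habs : ‖((x:ℝ):ℂ)‖ = x := habs_ofReal_nonneg x hx
      have hre : ((x:ℝ):ℂ).re = x := Complex.ofReal_re x
      rw [hgnorm, hre]
      calc Real.exp (-(A' * x)) * ‖h ((x:ℝ):ℂ)‖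
          ≤ Real.exp (-(A' * x)) * (C * Real.exp (A * x)) := by
            apply mul_le_mul_of_nonneg_left _ (le_of_lt (Real.exp_pos _))
            have := htype ((x:ℝ):ℂ) (by rw [hre]; exact hx)
            rwa [habs] at this
        _ = C * Real.exp ((A - A') * x) := by
            rw [show Real.exp (-(A' * x)) * (C * Real.exp (A * x))
              = C * (Real.exp (A * x) * Real.exp (-(A' * x))) from by ring,
              ← Real.exp_add]
            congr 1
            ring
        _ ≤ C * 1 := by
            apply mul_le_mul_of_nonneg_left _ hC0
            rw [Real.exp_le_one_iff]
            nlinarith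
        _ = C := mul_one C
    · intro x
      have hre : (((x:ℝ):ℂ) * Complex.I).re = 0 := by simp
      rw [hgnorm, hre, mul_zero, neg_zero, Real.exp_zero, one_mul]
      rw [show ((x:ℝ):ℂ) * Complex.I = Complex.I * ((x:ℝ):ℂ) by ring]
      exact him x
    · exact hz
  have gzero : ∀ k, g ((b k : ℝ) : ℂ) = 0 := by
    intro k; rw [hg]; simp only; rw [hzero k, mul_zero]
  have hb_up : ∀ᶠ k : ℕ in atTop, b k ≤ (k : ℝ) := by
    have h1 : ∀ᶠ k : ℕ in atTop, b k / (k:ℝ) ≤ 1 :=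
      hb_density.eventually (eventually_le_nhds (by norm_num : (1:ℝ)/2 < 1))
    filter_upwards [h1, eventually_ge_atTop 1] with k hk1 hk2
    have hkpos : (0:ℝ) < (k:ℝ) := by exact_mod_cast hk2
    rw [div_le_one hkpos] at hk1
    exact hk1
  -- key: h vanishes off the real axis in the open half-plane
  have hgz : ∀ z : ℂ, 0 < z.re → z.im ≠ 0 → h z = 0 := by
    intro z hx hy
    have hzb : ∀ k, z ≠ ((b k : ℝ) : ℂ) := by
      intro k hzk
      apply hy
      rw [hzk]; simp
    have hprops := blaschkeIter_props g c₁ hc₁ b hb_mono hb_pos hgd_closed hbound gzero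
    have hQbound : ∀ n : ℕ, ‖g z‖ ≤ c₁ * ∏ k ∈ Finset.range n,
        ‖z - ((b k:ℝ):ℂ)‖ / ‖z + ((b k:ℝ):ℂ)‖ := by
      intro n
      have hGz := blaschkeIter_eq g c₁ hc₁ b hb_mono hb_pos hgd_closed hbound gzero z hzb n
      have hGb := (hprops n).2.1 z (le_of_lt hx)
      set Q : ℝ := ∏ k ∈ Finset.range n,
        ‖z - ((b k:ℝ):ℂ)‖ / ‖z + ((b k:ℝ):ℂ)‖ with hQ
      have hden : ∀ k, ‖z - ((b k:ℝ):ℂ)‖ ≠ 0 := by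
        intro k
        apply norm_ne_zero_iff.2
        exact sub_ne_zero.2 (hzb k)
      have hnum : ∀ k, ‖z + ((b k:ℝ):ℂ)‖ ≠ 0 := by
        intro k
        apply norm_ne_zero_iff.2
        intro h0
        have : (z + ((b k:ℝ):ℂ)).re = 0 := by rw [h0]; simp
        simp only [Complex.add_re, Complex.ofReal_re] at this
        linarith [hb_pos k]
      have hPQ : ‖∏ k ∈ Finset.range n, (z + ((b k:ℝ):ℂ))/(z - ((b k:ℝ):ℂ))‖ * Q = 1 := by
        rw [norm_prod, hQ, ← Finset.prod_mul_distrib]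
        apply Finset.prod_eq_one
        intro k _
        rw [norm_div]
        field_simp
        rw [mul_comm]
        exact div_self (mul_ne_zero (hden k) (hnum k))
      have hQnn : 0 ≤ Q := by
        rw [hQ]
        apply Finset.prod_nonneg
        intro k _
        positivity
      calc ‖g z‖ = ‖g z‖ * (‖∏ k ∈ Finset.range n, (z + ((b k:ℝ):ℂ))/(z - ((b k:ℝ):ℂ))‖ * Q) := by
            rw [hPQ, mul_one]
        _ = ‖g z‖ * ‖∏ k ∈ Finset.range n, (z + ((b k:ℝ):ℂ))/(z - ((b k:ℝ):ℂ))‖ * Q := by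
            rw [mul_assoc]
        _ = ‖g z * ∏ k ∈ Finset.range n, (z + ((b k:ℝ):ℂ))/(z - ((b k:ℝ):ℂ))‖ * Q := by
            rw [← norm_mul]
        _ = ‖blaschkeIter g b n z‖ * Q := by rw [← hGz]
        _ ≤ c₁ * Q := mul_le_mul_of_nonneg_right hGb hQnn
    have hlim : Tendsto (fun n => c₁ * ∏ k ∈ Finset.range n,
        ‖z - ((b k:ℝ):ℂ)‖ / ‖z + ((b k:ℝ):ℂ)‖) atTop (𝓝 (c₁ * 0)) :=
      (prod_tendsto_zero b hb_pos γ hγ hb_gap hb_up z hx hy).const_mul c₁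
    have hgz0 : ‖g z‖ ≤ 0 := by
      rw [show (0:ℝ) = c₁ * 0 by ring]
      exact ge_of_tendsto hlim (Filter.Eventually.of_forall hQbound)
    have : g z = 0 := norm_eq_zero.1 (le_antisymm hgz0 (norm_nonneg _))
    rw [hg] at this
    simp only at this
    rcases mul_eq_zero.1 this with h1 | h2
    · exact absurd h1 (Complex.exp_ne_zero _)
    · exact h2
  -- extend by continuity
  intro z hz
  set ε : ℝ := if 0 ≤ z.im then 1 else -1 with hε
  set w : ℕ → ℂ := fun n => z + Complex.ofReal ((1:ℝ)/((n:ℝ)+1)) * (1 + (ε:ℂ) * Complex.I) with hw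
  have simp_lemmas : True := trivial
  have hwre : ∀ n, (w n).re = z.re + 1/((n:ℝ)+1) := by
    intro n
    rw [hw]
    simp only [Complex.add_re, Complex.add_im, Complex.mul_re, Complex.mul_im,
      Complex.ofReal_re, Complex.ofReal_im, Complex.one_re, Complex.one_im,
      Complex.I_re, Complex.I_im]
    ring
  have hwim : ∀ n, (w n).im = z.im + ε/((n:ℝ)+1) := by
    intro n
    rw [hw]
    simp only [Complex.add_re, Complex.add_im, Complex.mul_re, Complex.mul_im,
      Complex.ofReal_re, Complex.ofReal_im, Complex.one_re, Complex.one_im,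
      Complex.I_re, Complex.I_im]
    ring
  have hwpos : ∀ n, 0 < (w n).re := by
    intro n
    rw [hwre]
    have : (0:ℝ) < 1/((n:ℝ)+1) := by positivity
    linarith
  have hwim_ne : ∀ n, (w n).im ≠ 0 := by
    intro n
    rw [hwim]
    have hq : (0:ℝ) < 1/((n:ℝ)+1) := by positivity
    by_cases him0 : 0 ≤ z.im
    · rw [hε, if_pos him0]
      intro hcon
      nlinarith
    · rw [hε, if_neg him0]
      push_neg at him0
      intro hcon
      have hrw : (-1:ℝ)/((n:ℝ)+1) = -(1/((n:ℝ)+1)) := by ring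
      rw [hrw] at hcon
      linarith
  have hwtend : Tendsto w atTop (𝓝 z) := by
    have h1 : Tendsto (fun n : ℕ => Complex.ofReal ((1:ℝ)/((n:ℝ)+1))) atTop (𝓝 ((0:ℝ):ℂ)) :=
      (Complex.continuous_ofReal.tendsto 0).comp tendsto_one_div_add_atTop_nhds_zero_nat
    have h2 : Tendsto w atTop (𝓝 (z + ((0:ℝ):ℂ) * (1 + (ε:ℂ) * Complex.I))) :=
      tendsto_const_nhds.add (h1.mul tendsto_const_nhds)
    simpa using h2
  have hcont : ContinuousWithinAt h {z : ℂ | 0 ≤ z.re} z := hdiff.continuousOn z hz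
  have htend : Tendsto (fun n => h (w n)) atTop (𝓝 (h z)) := by
    apply hcont.tendsto.comp
    rw [tendsto_nhdsWithin_iff]
    exact ⟨hwtend, Filter.Eventually.of_forall (fun n => le_of_lt (hwpos n))⟩
  have hzero_seq : (fun n => h (w n)) = fun _ => (0:ℂ) := by
    funext n
    exact hgz (w n) (hwpos n) (hwim_ne n)
  rw [hzero_seq] at htend
  exact tendsto_nhds_unique htend tendsto_const_nhds
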